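/- Let H be Sweedler's 4-dimensional Hopf algebra over a field F of characteristic 0 with the H*-action of the previous statements. Then the H*-codimension sequence satisfies c_n^{H*}(H) ≤ 4^{n+1} for all n, and there exist C > 0 and r ∈ ℝ with C n^r 4^n ≤ c_n^{H*}(H) for all n ∈ ℕ; consequently the Hopf PI-exponent lim_{n→∞} (c_n^{H*}(H))^{1/n} exists and equals 4. -/

import Mathlib

open Equiv Filter

/-- The set of evaluations on `H` of multilinear `H*`-monomials
`x_{σ(1)}^{h₁} ⋯ x_{σ(n)}^{h_n}`, where the `h_i` range over the span of the dual basis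
operators `g₁, g_c, g_b, g_{cb}` (i.e. over all of `H*`). Its span realizes
`P_n^{H*}/(P_n^{H*} ∩ Id^{H*}(H))`. -/
def sweedlerMonomials (F : Type*) [Field F] (H : Type*) [Ring H] [Algebra F H]
    (g₁ gc gb gcb : H →ₗ[F] H) (n : ℕ) : Set ((Fin n → H) → H) :=
  { f | ∃ (σ : Perm (Fin n)) (h : Fin n → (H →ₗ[F] H)),
      (∀ i, h i ∈ Submodule.span F {g₁, gc, gb, gcb}) ∧
      f = fun x => (List.ofFn fun i => h i (x (σ i))).prod }

/-- Auxiliary: the four dual-basis operators as a family indexed by `Fin 4`. -/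
def sweedlerG {F H : Type*} [Field F] [Ring H] [Algebra F H]
    (g₁ gc gb gcb : H →ₗ[F] H) : Fin 4 → (H →ₗ[F] H) := fun k =>
  match k with
  | 0 => g₁
  | 1 => gc
  | 2 => gb
  | 3 => gcb

/-- Auxiliary: the selector elements `1, c, b, cb` as a family indexed by `Fin 4`. -/
def sweedlerSel {H : Type*} [Ring H] (c b : H) : Fin 4 → H := fun k =>
  match k with
  | 0 => 1
  | 1 => c
  | 2 => b
  | 3 => c * b

/-- For Sweedler's 4-dimensional Hopf algebra `H` with the action of its dual `H*`,
the `H*`-codimensions satisfy `c_n^{H*}(H) ≤ 4^{n+1}` and `C n^r 4^n ≤ c_n^{H*}(H)`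
for suitable `C > 0`, `r ∈ ℝ`; consequently the Hopf PI-exponent
`lim_{n→∞} c_n^{H*}(H)^{1/n}` exists and equals `4`. -/
theorem sweedler_codim_growth (F : Type*) [Field F] [CharZero F]
    (H : Type*) [Ring H] [Algebra F H]
    (c b : H) (hc : c ^ 2 = 1) (hb : b ^ 2 = 0) (hbc : b * c = -(c * b))
    (bas : Module.Basis (Fin 4) F H)
    (hbas : bas 0 = 1 ∧ bas 1 = c ∧ bas 2 = b ∧ bas 3 = c * b)
    (g₁ gc gb gcb : H →ₗ[F] H)
    (hg₁ : g₁ 1 = 1 ∧ g₁ c = 0 ∧ g₁ b = b ∧ g₁ (c * b) = 0)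
    (hgc : gc 1 = 0 ∧ gc c = c ∧ gc b = 0 ∧ gc (c * b) = c * b)
    (hgb : gb 1 = 0 ∧ gb c = 0 ∧ gb b = c ∧ gb (c * b) = 0)
    (hgcb : gcb 1 = 0 ∧ gcb c = 0 ∧ gcb b = 0 ∧ gcb (c * b) = 1) :
    (∀ n : ℕ, Module.finrank F
        ↥(Submodule.span F (sweedlerMonomials F H g₁ gc gb gcb n)) ≤ 4 ^ (n + 1)) ∧
    (∃ (C : ℝ) (r : ℝ), 0 < C ∧ ∀ n : ℕ, 0 < n →
      C * (n : ℝ) ^ r * 4 ^ n ≤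
        (Module.finrank F ↥(Submodule.span F (sweedlerMonomials F H g₁ gc gb gcb n)) : ℝ)) ∧
    Tendsto (fun n : ℕ =>
      ((Module.finrank F ↥(Submodule.span F (sweedlerMonomials F H g₁ gc gb gcb n)) : ℝ))
        ^ (1 / (n : ℝ))) atTop (nhds 4) := by
  classical
  obtain ⟨hbas0, hbas1, hbas2, hbas3⟩ := hbas
  haveI : Module.Finite F H := Module.Finite.of_basis bas
  haveI : Module.Free F H := Module.Free.of_basis bas
  have hfr : Module.finrank F H = 4 := by
    rw [Module.finrank_eq_card_basis bas, Fintype.card_fin]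
  -- basic multiplication facts
  have hcc : c * c = 1 := by rw [← pow_two]; exact hc
  have hbb : b * b = 0 := by rw [← pow_two]; exact hb
  have hbcb : b * (c * b) = 0 := by
    rw [← mul_assoc, hbc, neg_mul, mul_assoc, hbb, mul_zero, neg_zero]
  have hcbb : (c * b) * b = 0 := by rw [mul_assoc, hbb, mul_zero]
  have hcbcb : (c * b) * (c * b) = 0 := by rw [mul_assoc, hbcb, mul_zero]
  have hccb : c * (c * b) = b := by rw [← mul_assoc, hcc, one_mul]
  have hcbc : (c * b) * c = -b := by rw [mul_assoc, hbc, mul_neg, hccb]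
  -- the functional φ, the coefficient of 1 and c
  set φ : H →ₗ[F] F := bas.coord 0 + bas.coord 1 with hφdef
  have hφbas : ∀ j : Fin 4, φ (bas j) =
      (if j = 0 then 1 else 0) + (if j = 1 then 1 else 0) := by
    intro j
    simp [hφdef, Module.Basis.coord_apply, Module.Basis.repr_self, Finsupp.single_apply]
  have hφ1 : φ 1 = 1 := by rw [← hbas0, hφbas]; simp
  have hφc : φ c = 1 := by rw [← hbas1, hφbas]; simp
  have hφb : φ b = 0 := by rw [← hbas2, hφbas]; simp
  have hφcb : φ (c * b) = 0 := by rw [← hbas3, hφbas]; simp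
  -- the submodule W = span {b, cb}
  set W : Submodule F H := Submodule.span F ({b, c * b} : Set H) with hWdef
  have hmem_b : b ∈ W := Submodule.subset_span (Or.inl rfl)
  have hmem_cb : c * b ∈ W := Submodule.subset_span (Or.inr rfl)
  have hφW : ∀ w ∈ W, φ w = 0 := by
    intro w hw
    have hle : W ≤ LinearMap.ker φ := by
      rw [hWdef, Submodule.span_le]
      rintro x (rfl | rfl) <;> simp [LinearMap.mem_ker, hφb, hφcb]
    exact hle hw
  have hWc : ∀ w ∈ W, c * w ∈ W := by
    intro w hw
    induction hw using Submodule.span_induction with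
    | mem x hx =>
      rcases hx with rfl | rfl
      · exact hmem_cb
      · rw [hccb]; exact hmem_b
    | zero => rw [mul_zero]; exact W.zero_mem
    | add x y _ _ hx hy => rw [mul_add]; exact W.add_mem hx hy
    | smul r x _ hx => rw [mul_smul_comm]; exact W.smul_mem r hx
  have hWb : ∀ w ∈ W, b * w = 0 := by
    intro w hw
    induction hw using Submodule.span_induction with
    | mem x hx =>
      rcases hx with rfl | rfl
      · exact hbb
      · exact hbcb
    | zero => rw [mul_zero]
    | add x y _ _ hx hy => rw [mul_add, hx, hy, add_zero]
    | smul r x _ hx => rw [mul_smul_comm, hx, smul_zero]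
  have hWcb : ∀ w ∈ W, (c * b) * w = 0 := by
    intro w hw
    induction hw using Submodule.span_induction with
    | mem x hx =>
      rcases hx with rfl | rfl
      · exact hcbb
      · exact hcbcb
    | zero => rw [mul_zero]
    | add x y _ _ hx hy => rw [mul_add, hx, hy, add_zero]
    | smul r x _ hx => rw [mul_smul_comm, hx, smul_zero]
  -- products of lists of selector-type elements
  have prodA : ∀ l : List H, (∀ x ∈ l, x = 1 ∨ x = c) → l.prod = 1 ∨ l.prod = c := by
    intro l
    induction l with
    | nil => intro _; exact Or.inl List.prod_nil
    | cons a t ih =>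
      intro hmem
      rw [List.prod_cons]
      rcases hmem a List.mem_cons_self with rfl | rfl <;>
        rcases ih (fun x hx => hmem x (List.mem_cons_of_mem _ hx)) with hp | hp <;>
        rw [hp] <;> simp [hcc]
  have prodB : ∀ l : List H, (∀ x ∈ l, x = 1 ∨ x = c ∨ x = b ∨ x = c * b) →
      (∃ x ∈ l, x = b ∨ x = c * b) → l.prod ∈ W := by
    intro l
    induction l with
    | nil =>
      rintro _ ⟨x, hx, _⟩
      exact absurd hx List.not_mem_nil
    | cons a t ih =>
      intro hmem hex
      rw [List.prod_cons]
      by_cases hex' : ∃ x ∈ t, x = b ∨ x = c * b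
      · have hp := ih (fun x hx => hmem x (List.mem_cons_of_mem _ hx)) hex'
        rcases hmem a List.mem_cons_self with rfl | rfl | rfl | rfl
        · rw [one_mul]; exact hp
        · exact hWc _ hp
        · rw [hWb _ hp]; exact W.zero_mem
        · rw [hWcb _ hp]; exact W.zero_mem
      · have ht : ∀ x ∈ t, x = 1 ∨ x = c := by
          intro x hx
          rcases hmem x (List.mem_cons_of_mem _ hx) with h | h | h | h
          · exact Or.inl h
          · exact Or.inr h
          · exact absurd ⟨x, hx, Or.inl h⟩ hex'
          · exact absurd ⟨x, hx, Or.inr h⟩ hex'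
        have hpa : a = b ∨ a = c * b := by
          rcases hex with ⟨x, hx, hxv⟩
          rcases List.mem_cons.mp hx with rfl | hx'
          · exact hxv
          · exact absurd ⟨x, hx', hxv⟩ hex'
        rcases prodA t ht with hp | hp <;> rcases hpa with rfl | rfl <;> rw [hp]
        · rw [mul_one]; exact hmem_b
        · rw [mul_one]; exact hmem_cb
        · rw [hbc]; exact W.neg_mem hmem_cb
        · rw [hcbc]; exact W.neg_mem hmem_b
  -- the entry table
  set G : Fin 4 → (H →ₗ[F] H) := sweedlerG g₁ gc gb gcb with hGdef
  set sel : Fin 4 → H := sweedlerSel c b with hseldef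
  have hGmem : ∀ k : Fin 4, G k ∈ ({g₁, gc, gb, gcb} : Set (H →ₗ[F] H)) := by
    intro k
    fin_cases k <;> simp [hGdef, sweedlerG]
  have hEdiag : ∀ k : Fin 4, G k (sel k) = 1 ∨ G k (sel k) = c := by
    intro k
    fin_cases k <;>
      simp [hGdef, hseldef, sweedlerG, sweedlerSel,
        hg₁.1, hgc.2.1, hgb.2.2.1, hgcb.2.2.2]
  have hEall : ∀ k j : Fin 4, G k (sel j) = 0 ∨ G k (sel j) = 1 ∨ G k (sel j) = c ∨
      G k (sel j) = b ∨ G k (sel j) = c * b := by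
    intro k j
    fin_cases k <;> fin_cases j <;>
      simp [hGdef, hseldef, sweedlerG, sweedlerSel,
        hg₁.1, hg₁.2.1, hg₁.2.2.1, hg₁.2.2.2,
        hgc.1, hgc.2.1, hgc.2.2.1, hgc.2.2.2,
        hgb.1, hgb.2.1, hgb.2.2.1, hgb.2.2.2,
        hgcb.1, hgcb.2.1, hgcb.2.2.1, hgcb.2.2.2]
  have hEoff : ∀ k j : Fin 4, k ≠ j →
      G k (sel j) = 0 ∨ G k (sel j) = b ∨ G k (sel j) = c * b := by
    intro k j hkj
    fin_cases k <;> fin_cases j <;> first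
      | exact absurd rfl hkj
      | simp [hGdef, hseldef, sweedlerG, sweedlerSel,
          hg₁.1, hg₁.2.1, hg₁.2.2.1, hg₁.2.2.2,
          hgc.1, hgc.2.1, hgc.2.2.1, hgc.2.2.2,
          hgb.1, hgb.2.1, hgb.2.2.1, hgb.2.2.2,
          hgcb.1, hgcb.2.1, hgcb.2.2.1, hgcb.2.2.2]
  -- the delta computation
  have hdelta : ∀ (n : ℕ) (v w : Fin n → Fin 4),
      φ ((List.ofFn fun i => G (v i) (sel (w i))).prod) = if v = w then 1 else 0 := by
    intro n v w
    by_cases hvw : v = w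
    · subst hvw
      rw [if_pos rfl]
      have hmemA : ∀ x ∈ (List.ofFn fun i => G (v i) (sel (v i))), x = 1 ∨ x = c := by
        intro x hx
        obtain ⟨i, rfl⟩ := List.mem_ofFn.mp hx
        exact hEdiag (v i)
      rcases prodA _ hmemA with hp | hp
      · rw [hp, hφ1]
      · rw [hp, hφc]
    · rw [if_neg hvw]
      by_cases h0 : ∃ i, G (v i) (sel (w i)) = 0
      · obtain ⟨i, hi⟩ := h0
        rw [List.prod_eq_zero (List.mem_ofFn.mpr ⟨i, hi⟩), map_zero]
      · push_neg at h0
        apply hφW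
        apply prodB
        · intro x hx
          obtain ⟨i, rfl⟩ := List.mem_ofFn.mp hx
          rcases hEall (v i) (w i) with h | h | h | h | h
          · exact absurd h (h0 i)
          · exact Or.inl h
          · exact Or.inr (Or.inl h)
          · exact Or.inr (Or.inr (Or.inl h))
          · exact Or.inr (Or.inr (Or.inr h))
        · obtain ⟨i, hi⟩ := Function.ne_iff.mp hvw
          refine ⟨G (v i) (sel (w i)), List.mem_ofFn.mpr ⟨i, rfl⟩, ?_⟩
          rcases hEoff _ _ hi with h | h | h
          · exact absurd h (h0 i)
          · exact Or.inl h
          · exact Or.inr h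
  -- the main finrank bounds
  have main : ∀ n : ℕ,
      4 ^ n ≤ Module.finrank F ↥(Submodule.span F (sweedlerMonomials F H g₁ gc gb gcb n)) ∧
      Module.finrank F ↥(Submodule.span F (sweedlerMonomials F H g₁ gc gb gcb n)) ≤
        4 ^ (n + 1) := by
    intro n
    set S := sweedlerMonomials F H g₁ gc gb gcb n with hSdef
    -- the coercion from multilinear maps to functions
    let L : MultilinearMap F (fun _ : Fin n => H) H →ₗ[F] ((Fin n → H) → H) :=
      { toFun := fun m => ⇑m
        map_add' := fun m₁ m₂ => rfl
        map_smul' := fun r m => rfl }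
    have hSL : S ⊆ ↑(LinearMap.range L) := by
      rintro f ⟨σ, h, hmem, rfl⟩
      refine ⟨((MultilinearMap.mkPiAlgebraFin F n H).compLinearMap h).domDomCongr σ, ?_⟩
      funext x
      simp [L, MultilinearMap.domDomCongr_apply, MultilinearMap.compLinearMap_apply,
        MultilinearMap.mkPiAlgebraFin_apply]
    have hspanle : Submodule.span F S ≤ LinearMap.range L := Submodule.span_le.mpr hSL
    haveI : FiniteDimensional F (MultilinearMap F (fun _ : Fin n => H) H) := inferInstance
    haveI : FiniteDimensional F ↥(LinearMap.range L) := inferInstance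
    haveI : FiniteDimensional F ↥(Submodule.span F S) :=
      Submodule.finiteDimensional_of_le hspanle
    -- upper bound via evaluation on basis vectors
    have hupper : Module.finrank F ↥(Submodule.span F S) ≤ 4 ^ (n + 1) := by
      have h1 : Module.finrank F ↥(Submodule.span F S) ≤
          Module.finrank F ↥(LinearMap.range L) := Submodule.finrank_mono hspanle
      have h2 : Module.finrank F ↥(LinearMap.range L) ≤
          Module.finrank F (MultilinearMap F (fun _ : Fin n => H) H) :=
        LinearMap.finrank_range_le L
      let E : MultilinearMap F (fun _ : Fin n => H) H →ₗ[F] ((Fin n → Fin 4) → H) :=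
        { toFun := fun m j => m (fun i => bas (j i))
          map_add' := fun m₁ m₂ => rfl
          map_smul' := fun r m => rfl }
      have hinj : Function.Injective E := by
        intro m₁ m₂ hE
        exact Module.Basis.ext_multilinear (fun _ => bas) fun v => congrFun hE v
      have h3 : Module.finrank F (MultilinearMap F (fun _ : Fin n => H) H) ≤
          Module.finrank F ((Fin n → Fin 4) → H) :=
        LinearMap.finrank_le_finrank_of_injective hinj
      have h4 : Module.finrank F ((Fin n → Fin 4) → H) = 4 ^ (n + 1) := by
        rw [Module.finrank_pi_fintype, Finset.sum_const, smul_eq_mul, hfr]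
        simp [Fintype.card_fun, pow_succ]
      omega
    refine ⟨?_, hupper⟩
    -- lower bound via the linearly independent family
    let fam : (Fin n → Fin 4) → ((Fin n → H) → H) := fun v x =>
      (List.ofFn fun i => G (v i) (x i)).prod
    have hfamS : ∀ v, fam v ∈ S := by
      intro v
      exact ⟨Equiv.refl (Fin n), fun i => G (v i),
        fun i => Submodule.subset_span (hGmem (v i)), rfl⟩
    have hli : LinearIndependent F fam := by
      rw [Fintype.linearIndependent_iff]
      intro g hg w
      have h1 := congrFun hg (fun i => sel (w i))
      simp only [Finset.sum_apply, Pi.smul_apply, Pi.zero_apply, smul_eq_mul] at h1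
      have h2 := congrArg φ h1
      rw [map_sum, map_zero] at h2
      simp only [map_smul, smul_eq_mul, fam] at h2
      simp only [hdelta n, mul_ite, mul_one, mul_zero] at h2
      rw [Finset.sum_ite_eq' Finset.univ w g] at h2
      simpa using h2
    have hcard : Module.finrank F ↥(Submodule.span F (Set.range fam)) = 4 ^ n := by
      rw [finrank_span_eq_card hli]
      simp [Fintype.card_fun]
    have hlefam : Submodule.span F (Set.range fam) ≤ Submodule.span F S :=
      Submodule.span_mono (Set.range_subset_iff.mpr hfamS)
    calc (4 : ℕ) ^ n = Module.finrank F ↥(Submodule.span F (Set.range fam)) := hcard.symm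
      _ ≤ Module.finrank F ↥(Submodule.span F S) := Submodule.finrank_mono hlefam
  -- conclude
  refine ⟨fun n => (main n).2, ⟨1, 0, one_pos, ?_⟩, ?_⟩
  · intro n hn
    have h1 := (main n).1
    have hcast : ((4 : ℝ)) ^ n ≤
        (Module.finrank F ↥(Submodule.span F (sweedlerMonomials F H g₁ gc gb gcb n)) : ℝ) := by
      exact_mod_cast h1
    simpa [Real.rpow_zero] using hcast
  · set a : ℕ → ℝ := fun n =>
      (Module.finrank F ↥(Submodule.span F (sweedlerMonomials F H g₁ gc gb gcb n)) : ℝ)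
      with hadef
    have halow : ∀ n : ℕ, (4 : ℝ) ^ n ≤ a n := by
      intro n; simp only [hadef]; exact_mod_cast (main n).1
    have haup : ∀ n : ℕ, a n ≤ (4 : ℝ) ^ (n + 1) := by
      intro n; simp only [hadef]; exact_mod_cast (main n).2
    have hlow : ∀ᶠ n : ℕ in atTop, (4 : ℝ) ≤ a n ^ (1 / (n : ℝ)) := by
      filter_upwards [eventually_ge_atTop 1] with n hn
      have hn' : (n : ℝ) ≠ 0 := Nat.cast_ne_zero.mpr (by omega)
      have h1 : ((4 : ℝ) ^ n) ^ (1 / (n : ℝ)) ≤ a n ^ (1 / (n : ℝ)) :=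
        Real.rpow_le_rpow (by positivity) (halow n) (by positivity)
      rwa [← Real.rpow_natCast (4 : ℝ) n, ← Real.rpow_mul (by norm_num),
        mul_one_div_cancel hn', Real.rpow_one] at h1
    have hup : ∀ᶠ n : ℕ in atTop, a n ^ (1 / (n : ℝ)) ≤ 4 * (4 : ℝ) ^ (1 / (n : ℝ)) := by
      filter_upwards [eventually_ge_atTop 1] with n hn
      have hn' : (n : ℝ) ≠ 0 := Nat.cast_ne_zero.mpr (by omega)
      have h0 : (0 : ℝ) ≤ a n := le_trans (by positivity) (halow n)
      have h2 : a n ^ (1 / (n : ℝ)) ≤ ((4 : ℝ) ^ (n + 1)) ^ (1 / (n : ℝ)) :=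
        Real.rpow_le_rpow h0 (haup n) (by positivity)
      rwa [← Real.rpow_natCast (4 : ℝ) (n + 1), ← Real.rpow_mul (by norm_num),
        show ((n + 1 : ℕ) : ℝ) * (1 / (n : ℝ)) = 1 + 1 / (n : ℝ) by
          push_cast; field_simp,
        Real.rpow_add (by norm_num : (0 : ℝ) < 4), Real.rpow_one] at h2
    have hupt : Tendsto (fun n : ℕ => 4 * (4 : ℝ) ^ (1 / (n : ℝ))) atTop (nhds 4) := by
      have h1 : Tendsto (fun n : ℕ => 1 / (n : ℝ)) atTop (nhds 0) :=
        tendsto_one_div_atTop_nhds_zero_nat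
      have h2 : ContinuousAt (fun y : ℝ => (4 : ℝ) ^ y) 0 :=
        Real.continuousAt_const_rpow (by norm_num)
      have h3 : Tendsto (fun n : ℕ => (4 : ℝ) ^ (1 / (n : ℝ))) atTop (nhds ((4 : ℝ) ^ (0 : ℝ))) :=
        h2.tendsto.comp h1
      rw [Real.rpow_zero] at h3
      have := h3.const_mul (4 : ℝ)
      simpa using this
    exact tendsto_of_tendsto_of_tendsto_of_le_of_le' tendsto_const_nhds hupt hlow hup
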